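/- Let G = SL(n,ℝ) with n ≥ 3, σ(g) = SgS^{-1} where S is the matrix with -1 in the (1,n) and (n,1) entries, identity block I_{n-2} in the middle, and zeros elsewhere. Let a_t = exp(t·diag(1,0,…,0,-1)) and K = SO(n). If g ∈ K a_t H where H is the fixed point group of σ, then ‖g σ(g)^{-1}‖²_{HS} = n - 2 + 2cosh(4t), where ‖·‖_{HS} is the Hilbert–Schmidt (Frobenius) norm on n×n matrices. -/

import Mathlib

open Matrix

set_option maxHeartbeats 1000000 in
/-- if `g ∈ K a_t H` in `SL(n,ℝ)`, then
`‖g σ(g)⁻¹‖²_HS = n - 2 + 2 cosh(4t)`. -/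
theorem stmt_9 (n : ℕ) (hn : 3 ≤ n) (t : ℝ)
    (S : Matrix (Fin n) (Fin n) ℝ)
    (hS : S = Matrix.of fun (i j : Fin n) =>
      if ((i:ℕ) = 0 ∧ (j:ℕ) = n - 1) ∨ ((i:ℕ) = n - 1 ∧ (j:ℕ) = 0) then (-1 : ℝ)
      else if i = j ∧ (i:ℕ) ≠ 0 ∧ (i:ℕ) ≠ n - 1 then 1 else 0)
    (a : Matrix (Fin n) (Fin n) ℝ)
    (ha : a = Matrix.diagonal fun (i : Fin n) =>
      if (i:ℕ) = 0 then Real.exp t else if (i:ℕ) = n - 1 then Real.exp (-t) else 1)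
    (g kk h : Matrix (Fin n) (Fin n) ℝ)
    (hkO : kkᵀ * kk = 1) (hkdet : kk.det = 1)
    (hhH : S * h * S⁻¹ = h) (hhdet : h.det = 1)
    (hg : g = kk * a * h) :
    Matrix.trace ((g * (S * g * S⁻¹)⁻¹) * (g * (S * g * S⁻¹)⁻¹)ᵀ)
      = (n:ℝ) - 2 + 2 * Real.cosh (4*t) := by
  have h0n : 0 < n := by omega
  have h1n : n - 1 < n := by omega
  set i0 : Fin n := ⟨0, h0n⟩ with hi0
  set i1 : Fin n := ⟨n - 1, h1n⟩ with hi1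
  have v0 : (i0 : ℕ) = 0 := rfl
  have v1 : (i1 : ℕ) = n - 1 := rfl
  have hne : i0 ≠ i1 := fun hc => by
    have := congrArg Fin.val hc
    rw [v0, v1] at this; omega
  set f : Fin n → ℝ := fun i =>
      if (i:ℕ) = 0 then Real.exp t else if (i:ℕ) = n - 1 then Real.exp (-t) else 1 with hf
  set b : Matrix (Fin n) (Fin n) ℝ := Matrix.diagonal fun i =>
      if (i:ℕ) = 0 then Real.exp (-t) else if (i:ℕ) = n - 1 then Real.exp t else 1 with hb
  have hba : b * a = 1 := by
    have hfun : (fun i : Fin n =>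
        (if (i:ℕ) = 0 then Real.exp (-t) else if (i:ℕ) = n - 1 then Real.exp t else 1) * f i)
        = fun _ => (1:ℝ) := by
      funext i; simp only [hf]
      split_ifs <;> simp [← Real.exp_add]
    rw [ha, hb, diagonal_mul_diagonal, hfun]
    exact diagonal_one
  have hainv : a⁻¹ = b := Matrix.inv_eq_left_inv hba
  have hSrep : S = 1 - (single i0 i0 1 + single i1 i1 1
      + single i0 i1 1 + single i1 i0 1) := by
    rw [hS]; ext i j
    simp only [of_apply, Matrix.sub_apply, Matrix.add_apply, one_apply, single, Fin.ext_iff, v0, v1]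
    split_ifs <;> first | rfl | (exfalso; omega) | norm_num
  have hSS : S * S = 1 := by
    obtain ⟨A, hA⟩ : ∃ A, A = single i0 i0 (1:ℝ) + single i1 i1 1
      + single i0 i1 1 + single i1 i0 1 := ⟨_, rfl⟩
    have hAA : A * A = A + A := by
      rw [hA]
      simp only [add_mul, mul_add, single_mul_single_same,
        single_mul_single_of_ne _ _ _ _ hne, single_mul_single_of_ne _ _ _ _ hne.symm, one_mul]
      abel
    rw [hSrep, ← hA, sub_mul, mul_sub, mul_sub, one_mul, one_mul, mul_one, hAA]
    abel
  have hSinv : S⁻¹ = S := Matrix.inv_eq_left_inv hSS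
  have hSsymm : Sᵀ = S := by
    rw [hS]; ext i j
    simp only [transpose_apply, of_apply, Fin.ext_iff]
    split_ifs <;> first | rfl | (exfalso; omega)
  have hSa : S * a = b * S := by
    ext i j
    rw [ha, hb, Matrix.mul_diagonal, Matrix.diagonal_mul, hS]
    simp only [of_apply, Fin.ext_iff, hf]
    split_ifs <;> first | ring1 | (exfalso; omega) | norm_num
  have hSb : S * b = a * S := by
    calc S * b = S * b * (S * S) := by rw [hSS, mul_one]
      _ = S * (b * S) * S := by noncomm_ring
      _ = S * (S * a) * S := by rw [hSa]
      _ = (S * S) * (a * S) := by noncomm_ring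
      _ = a * S := by rw [hSS, one_mul]
  have hkinv : kk⁻¹ = kkᵀ := Matrix.inv_eq_left_inv hkO
  have hhdet' : IsUnit h.det := by rw [hhdet]; exact isUnit_one
  have hhinv : h * h⁻¹ = 1 := Matrix.mul_nonsing_inv h hhdet'
  have hcomm : h * S = S * h := by
    rw [hSinv] at hhH
    calc h * S = (S * h * S) * S := by rw [hhH]
      _ = S * h * (S * S) := by noncomm_ring
      _ = S * h := by rw [hSS, mul_one]
  have cS : ∀ X : Matrix (Fin n) (Fin n) ℝ, S * (S * X) = X := fun X => by
    rw [← mul_assoc, hSS, one_mul]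
  have ck : ∀ X : Matrix (Fin n) (Fin n) ℝ, kkᵀ * (kk * X) = X := fun X => by
    rw [← mul_assoc, hkO, one_mul]
  have chh : ∀ X : Matrix (Fin n) (Fin n) ℝ, h * (h⁻¹ * X) = X := fun X => by
    rw [← mul_assoc, hhinv, one_mul]
  have chS : ∀ X : Matrix (Fin n) (Fin n) ℝ, h * (S * X) = S * (h * X) := fun X => by
    rw [← mul_assoc, hcomm, mul_assoc]
  have swapB : ∀ X : Matrix (Fin n) (Fin n) ℝ, S * (b * X) = a * (S * X) := fun X => by
    rw [← mul_assoc, hSb, mul_assoc]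
  have haT : aᵀ = a := by rw [ha]; exact diagonal_transpose _
  have hbT : bᵀ = b := by rw [hb]; exact diagonal_transpose _
  have hM : g * (S * g * S⁻¹)⁻¹ = kk * (a * (S * (b * (kkᵀ * S)))) := by
    rw [hSinv, hg, Matrix.mul_inv_rev, Matrix.mul_inv_rev, Matrix.mul_inv_rev,
      Matrix.mul_inv_rev, hSinv, hainv, hkinv]
    simp only [mul_assoc]
    rw [chS, chh]
  have hMT : (kk * (a * (S * (b * (kkᵀ * S)))))ᵀ = S * (kk * (b * (S * (a * kkᵀ)))) := by
    simp only [transpose_mul, transpose_transpose, hSsymm, haT, hbT, mul_assoc]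
  rw [hM, hMT]
  have hMM : kk * (a * (S * (b * (kkᵀ * S)))) * (S * (kk * (b * (S * (a * kkᵀ)))))
      = kk * (a * (a * (a * (a * kkᵀ)))) := by
    simp only [mul_assoc]
    rw [cS, ck, swapB, swapB, cS]
  rw [hMM, Matrix.trace_mul_comm]
  simp only [mul_assoc]
  rw [hkO, mul_one]
  have ha4 : a * (a * (a * a)) = diagonal fun i => f i * (f i * (f i * f i)) := by
    simp [ha, diagonal_mul_diagonal]
  rw [ha4, Matrix.trace_diagonal]
  have hpt : ∀ i : Fin n,
      f i * (f i * (f i * f i)) =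
        1 + ((if i = i0 then Real.exp (4*t) - 1 else 0)
          + (if i = i1 then Real.exp (-(4*t)) - 1 else 0)) := by
    intro i
    simp only [hf]
    by_cases h1 : i = i0 <;> by_cases h2 : i = i1
    · exact absurd (h1 ▸ h2) hne
    · subst h1
      rw [if_pos rfl, if_neg h2]
      simp only [v0]
      norm_num [← Real.exp_add]
      ring_nf
    · subst h2
      rw [if_neg h1, if_pos rfl]
      have e : n - 1 ≠ 0 := by omega
      simp only [v1]
      norm_num [e, ← Real.exp_add]
      ring_nf
    · have e0 : (i:ℕ) ≠ 0 := fun hc => h1 (by simp [Fin.ext_iff, v0, hc])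
      have e1 : (i:ℕ) ≠ n - 1 := fun hc => h2 (by simp [Fin.ext_iff, v1, hc])
      rw [if_neg h1, if_neg h2, if_neg e0, if_neg e1]
      norm_num
  have hsum : (∑ i : Fin n, f i * (f i * (f i * f i)))
      = ∑ i : Fin n, (1 + ((if i = i0 then Real.exp (4*t) - 1 else 0)
        + (if i = i1 then Real.exp (-(4*t)) - 1 else 0))) :=
    Finset.sum_congr rfl fun i _ => hpt i
  rw [hsum]
  simp [Finset.sum_add_distrib, Finset.sum_ite_eq', Real.cosh_eq]
  ring
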